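/- Let σ, τ > 0 and integers s_C ≥ 2, s_T ≥ 1 satisfy σ > √2·τ·(s_C−1)/√(s_C²/s_T + s_C). Define ρ = 4σ²·(s_C−1)·s_C²·s_T·(s_T+1)·(s_C·(σ²+2τ²) − 2τ²) / (−s_C·(σ²+4τ²)·s_T + s_C²·(σ² + 2(σ²+τ²)·s_T) + 2τ²·s_T)². Then 0 ≤ ρ < 1. -/

import Mathlib

set_option maxHeartbeats 1000000


theorem stmt_11 (sT sC : ℕ) (hsT : 1 ≤ sT) (hsC : 2 ≤ sC) (σ τ : ℝ) (hσ : 0 < σ) (hτ : 0 < τ)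
    (hcond : σ > Real.sqrt 2 * τ * ((sC : ℝ) - 1) / Real.sqrt ((sC : ℝ) ^ 2 / (sT : ℝ) + (sC : ℝ))) :
    0 ≤ 4 * σ ^ 2 * ((sC : ℝ) - 1) * (sC : ℝ) ^ 2 * (sT : ℝ) * ((sT : ℝ) + 1) *
          ((sC : ℝ) * (σ ^ 2 + 2 * τ ^ 2) - 2 * τ ^ 2) /
        (-(sC : ℝ) * (σ ^ 2 + 4 * τ ^ 2) * (sT : ℝ) +
            (sC : ℝ) ^ 2 * (σ ^ 2 + 2 * (σ ^ 2 + τ ^ 2) * (sT : ℝ)) + 2 * τ ^ 2 * (sT : ℝ)) ^ 2 ∧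
      4 * σ ^ 2 * ((sC : ℝ) - 1) * (sC : ℝ) ^ 2 * (sT : ℝ) * ((sT : ℝ) + 1) *
          ((sC : ℝ) * (σ ^ 2 + 2 * τ ^ 2) - 2 * τ ^ 2) /
        (-(sC : ℝ) * (σ ^ 2 + 4 * τ ^ 2) * (sT : ℝ) +
            (sC : ℝ) ^ 2 * (σ ^ 2 + 2 * (σ ^ 2 + τ ^ 2) * (sT : ℝ)) + 2 * τ ^ 2 * (sT : ℝ)) ^ 2 < 1 := by
  set c : ℝ := (sC : ℝ) with hc
  set t : ℝ := (sT : ℝ) with htdef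
  have hct : (2 : ℝ) ≤ c := by rw [hc]; exact_mod_cast hsC
  have htt : (1 : ℝ) ≤ t := by rw [htdef]; exact_mod_cast hsT
  have ht0 : (0 : ℝ) < t := by linarith
  have hc0 : (0 : ℝ) < c := by linarith
  have hs : (0 : ℝ) < c ^ 2 / t + c := by positivity
  -- derive key inequality : σ^2 * (c^2/t + c) > 2 * τ^2 * (c-1)^2
  have hsqrt : Real.sqrt (c ^ 2 / t + c) > 0 := Real.sqrt_pos.mpr hs
  have h1 : Real.sqrt 2 * τ * (c - 1) < σ * Real.sqrt (c ^ 2 / t + c) := by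
    rw [gt_iff_lt, div_lt_iff₀ hsqrt] at hcond
    linarith [hcond]
  have hRHSnn : 0 ≤ Real.sqrt 2 * τ * (c - 1) := by
    have : (0:ℝ) ≤ Real.sqrt 2 := Real.sqrt_nonneg 2
    have : (0:ℝ) ≤ c - 1 := by linarith
    positivity
  have h2 : (Real.sqrt 2 * τ * (c - 1)) ^ 2 < (σ * Real.sqrt (c ^ 2 / t + c)) ^ 2 := by
    exact pow_lt_pow_left₀ h1 hRHSnn (by norm_num)
  have hsq2 : Real.sqrt 2 ^ 2 = 2 := Real.sq_sqrt (by norm_num)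
  have hsqs : Real.sqrt (c ^ 2 / t + c) ^ 2 = c ^ 2 / t + c := Real.sq_sqrt hs.le
  have key : 2 * τ ^ 2 * (c - 1) ^ 2 < σ ^ 2 * (c ^ 2 / t + c) := by
    calc 2 * τ ^ 2 * (c - 1) ^ 2 = (Real.sqrt 2 * τ * (c - 1)) ^ 2 := by
          rw [mul_pow, mul_pow, hsq2]
      _ < (σ * Real.sqrt (c ^ 2 / t + c)) ^ 2 := h2
      _ = σ ^ 2 * (c ^ 2 / t + c) := by rw [mul_pow, hsqs]
  have key2 : 2 * τ ^ 2 * t * (c - 1) ^ 2 < σ ^ 2 * (c ^ 2 + c * t) := by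
    have h3 := mul_lt_mul_of_pos_right key ht0
    have : σ ^ 2 * (c ^ 2 / t + c) * t = σ ^ 2 * (c ^ 2 + c * t) := by
      field_simp
    nlinarith [h3]
  -- abbreviations
  set N : ℝ := 4 * σ ^ 2 * (c - 1) * c ^ 2 * t * (t + 1) * (c * (σ ^ 2 + 2 * τ ^ 2) - 2 * τ ^ 2) with hN
  set D : ℝ := -c * (σ ^ 2 + 4 * τ ^ 2) * t + c ^ 2 * (σ ^ 2 + 2 * (σ ^ 2 + τ ^ 2) * t) + 2 * τ ^ 2 * t with hD
  set X : ℝ := σ ^ 2 * (c * (t + c)) - 2 * τ ^ 2 * t * (c - 1) ^ 2 with hX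
  have hXpos : 0 < X := by rw [hX]; nlinarith [key2]
  have hid : D ^ 2 = N + X ^ 2 := by rw [hD, hN, hX]; ring
  have hNpos : 0 < N := by
    rw [hN]
    have hστ : (0:ℝ) < σ ^ 2 + 2 * τ ^ 2 := by positivity
    have h4a : 2 * (σ ^ 2 + 2 * τ ^ 2) ≤ c * (σ ^ 2 + 2 * τ ^ 2) :=
      mul_le_mul_of_nonneg_right hct hστ.le
    have hσ2 : (0:ℝ) < σ ^ 2 := by positivity
    have h4 : 0 < c * (σ ^ 2 + 2 * τ ^ 2) - 2 * τ ^ 2 := by linarith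
    have h5 : 0 < c - 1 := by linarith
    have h6 : (0:ℝ) < 4 * σ ^ 2 := by positivity
    have h7 : (0:ℝ) < c ^ 2 := by positivity
    have h8 : (0:ℝ) < t + 1 := by linarith
    exact mul_pos (mul_pos (mul_pos (mul_pos (mul_pos h6 h5) h7) ht0) h8) h4
  have hD2pos : 0 < D ^ 2 := by rw [hid]; linarith [sq_nonneg X, hNpos]
  constructor
  · exact div_nonneg hNpos.le hD2pos.le
  · rw [div_lt_one hD2pos]
    nlinarith [hXpos, hid]
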